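/- Let X₁, …, X_k be mutually independent Bernoulli random variables taking values in {0, 1}, and let z' ∈ (0, 1) and β > 1. If Var[1 + ∑ X_i] ≤ (E[1 + ∑ X_i])², then E[(1 + ∑ X_i)^{z'}] ≥ (1/(β² + 1))·(1 − 1/β)^{z'}·(E[1 + ∑ X_i])^{z'}. -/

import Mathlib

open MeasureTheory ProbabilityTheory

theorem stmt6 {Ω : Type*} [MeasurableSpace Ω] (μ : Measure Ω) [IsProbabilityMeasure μ]
    {k : ℕ} (X : Fin k → Ω → ℝ) (hmeas : ∀ i, Measurable (X i))
    (hindep : iIndepFun X μ)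
    (hBer : ∀ i ω, X i ω = 0 ∨ X i ω = 1)
    (z' β : ℝ) (hz0 : 0 < z') (hz1 : z' < 1) (hβ : 1 < β)
    (Y : Ω → ℝ) (hY : Y = fun ω => 1 + ∑ i, X i ω)
    (hvar : variance Y μ ≤ (∫ ω, Y ω ∂μ) ^ 2) :
    (1 / (β ^ 2 + 1)) * (1 - 1 / β) ^ z' * (∫ ω, Y ω ∂μ) ^ z'
      ≤ ∫ ω, (Y ω) ^ z' ∂μ := by
  have hβ0 : (0:ℝ) < β := lt_trans one_pos hβ
  have hYmeas : Measurable Y := by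
    rw [hY]; exact measurable_const.add (Finset.measurable_sum _ (fun i _ => hmeas i))
  have hY1 : ∀ ω, 1 ≤ Y ω := by
    intro ω; rw [hY]; simp only
    have : (0:ℝ) ≤ ∑ i, X i ω :=
      Finset.sum_nonneg (fun i _ => by rcases hBer i ω with h | h <;> simp [h])
    linarith
  have hYk : ∀ ω, Y ω ≤ 1 + k := by
    intro ω; rw [hY]; simp only
    have : ∑ i, X i ω ≤ ∑ _i : Fin k, (1:ℝ) :=
      Finset.sum_le_sum (fun i _ => by rcases hBer i ω with h | h <;> simp [h])
    simp only [Finset.sum_const, Finset.card_univ, Fintype.card_fin, nsmul_eq_mul,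
      mul_one] at this
    linarith
  have hmem2 : MemLp Y 2 μ :=
    MemLp.of_bound hYmeas.aestronglyMeasurable (1 + k)
      (Filter.Eventually.of_forall fun ω => by
        rw [Real.norm_eq_abs, abs_of_nonneg (by linarith [hY1 ω])]; exact hYk ω)
  have hint : Integrable Y μ := hmem2.integrable (by norm_num)
  obtain ⟨m, hm⟩ : ∃ m, m = ∫ ω, Y ω ∂μ := ⟨_, rfl⟩
  rw [← hm] at hvar ⊢
  have hm1 : (1:ℝ) ≤ m := by
    rw [hm]
    have := integral_mono (integrable_const (1:ℝ)) hint (fun ω => hY1 ω)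
    simpa using this
  have hm0 : (0:ℝ) < m := lt_of_lt_of_le one_pos hm1
  obtain ⟨c, hc⟩ : ∃ c, c = m * (1 - 1/β) := ⟨_, rfl⟩
  have h1β : (0:ℝ) < 1 - 1/β := by
    rw [sub_pos]; exact (div_lt_one hβ0).mpr hβ
  have hc0 : 0 < c := hc ▸ mul_pos hm0 h1β
  obtain ⟨d, hd⟩ : ∃ d, d = β * m + m / β := ⟨_, rfl⟩
  have hd0 : 0 < d := hd ▸ add_pos (mul_pos hβ0 hm0) (div_pos hm0 hβ0)
  obtain ⟨a, ha⟩ : ∃ a, a = (β + 1) * m := ⟨_, rfl⟩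
  have hlin : Integrable (fun ω => a ^ 2 - 2 * a * Y ω) μ := by
    have h1 : Integrable (fun ω => 2 * a * Y ω) μ := hint.const_mul (2 * a)
    exact (integrable_const (a ^ 2)).sub h1
  have hsqint : Integrable (fun ω => (Y ω) ^ 2) μ := hmem2.integrable_sq
  have hgint : Integrable (fun ω => ((a - Y ω) / d) ^ 2) μ := by
    have h2 : Integrable (fun ω => (a ^ 2 - 2 * a * Y ω) + (Y ω) ^ 2) μ := hlin.add hsqint
    have e : (fun ω => ((a - Y ω) / d) ^ 2)
        = fun ω => ((a ^ 2 - 2 * a * Y ω) + (Y ω) ^ 2) / d ^ 2 := by ext ω; ring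
    rw [e]
    exact h2.div_const _
  have hB : MeasurableSet {ω | Y ω < c} := measurableSet_lt hYmeas measurable_const
  have hY2 : ∫ ω, (Y ω) ^ 2 ∂μ = variance Y μ + m ^ 2 := by
    have h := variance_eq_sub hmem2
    simp only [Pi.pow_apply] at h
    rw [← hm] at h
    linarith
  have key : (μ {ω | Y ω < c}).toReal ≤ β ^ 2 / (β ^ 2 + 1) := by
    have step1 : (μ {ω | Y ω < c}).toReal ≤ ∫ ω, ((a - Y ω) / d) ^ 2 ∂μ := by
      have hind : ∀ ω, Set.indicator {ω | Y ω < c} (fun _ => (1:ℝ)) ω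
          ≤ ((a - Y ω) / d) ^ 2 := by
        intro ω
        by_cases h : Y ω < c
        · rw [Set.indicator_of_mem (show ω ∈ {ω | Y ω < c} from h)]
          have hacd : a - c = d := by rw [ha, hc, hd]; field_simp; ring
          have h1 : d ≤ a - Y ω := by rw [← hacd]; linarith
          have h2 : 1 ≤ (a - Y ω) / d := (one_le_div hd0).mpr h1
          nlinarith
        · rw [Set.indicator_of_notMem (show ω ∉ {ω | Y ω < c} from h)]
          positivity
      calc (μ {ω | Y ω < c}).toReal
          = ∫ ω, Set.indicator {ω | Y ω < c} (fun _ => (1:ℝ)) ω ∂μ := by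
            rw [integral_indicator_const _ hB]; simp; rfl
        _ ≤ _ := integral_mono ((integrable_const 1).indicator hB) hgint hind
    have step2 : ∫ ω, ((a - Y ω) / d) ^ 2 ∂μ
        = (variance Y μ + (β * m) ^ 2) / d ^ 2 := by
      have e1 : (fun ω => ((a - Y ω) / d) ^ 2)
          = fun ω => ((a ^ 2 - 2 * a * Y ω) + (Y ω) ^ 2) / d ^ 2 := by ext ω; ring
      rw [e1, integral_div, integral_add hlin hsqint, hY2]
      have e2 : ∫ ω, (a ^ 2 - 2 * a * Y ω) ∂μ = a ^ 2 - 2 * a * m := by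
        have h3 : Integrable (fun ω => 2 * a * Y ω) μ := hint.const_mul (2 * a)
        rw [integral_sub (integrable_const _) h3, integral_const_mul, ← hm, integral_const]
        simp
      rw [e2]
      congr 1
      rw [ha]
      ring
    have step3 : (variance Y μ + (β * m) ^ 2) / d ^ 2 ≤ β ^ 2 / (β ^ 2 + 1) := by
      rw [div_le_div_iff₀ (by positivity) (by positivity)]
      have hdβ : d * β = β ^ 2 * m + m := by rw [hd]; field_simp
      have hβ1 : (0:ℝ) < β ^ 2 + 1 := by positivity
      have h5 : (variance Y μ + (β * m) ^ 2) * (β ^ 2 + 1)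
          ≤ (m ^ 2 + (β * m) ^ 2) * (β ^ 2 + 1) :=
        mul_le_mul_of_nonneg_right (add_le_add_left hvar _) hβ1.le
      have h6 : (m ^ 2 + (β * m) ^ 2) * (β ^ 2 + 1) = (d * β) ^ 2 := by rw [hdβ]; ring
      have h7 : (d * β) ^ 2 = β ^ 2 * d ^ 2 := by ring
      linarith
    rw [step2] at step1
    linarith
  have hA : MeasurableSet {ω | c ≤ Y ω} := measurableSet_le measurable_const hYmeas
  have hPA : 1 / (β ^ 2 + 1) ≤ (μ {ω | c ≤ Y ω}).toReal := by
    have hcompl : {ω | c ≤ Y ω} = {ω | Y ω < c}ᶜ := by ext ω; simp [not_lt]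
    have h1 : (μ {ω | Y ω < c}ᶜ).toReal = 1 - (μ {ω | Y ω < c}).toReal := by
      rw [prob_compl_eq_one_sub hB,
        ENNReal.toReal_sub_of_le prob_le_one (by norm_num)]
      simp
    have hfe : 1 - β ^ 2 / (β ^ 2 + 1) = 1 / (β ^ 2 + 1) := by
      have : β ^ 2 + 1 ≠ 0 := by positivity
      field_simp; ring
    rw [hcompl, h1]
    linarith
  have hrmeas : Measurable (fun ω => (Y ω) ^ z') := by measurability
  have hrint : Integrable (fun ω => (Y ω) ^ z') μ := by
    refine (MemLp.of_bound (p := 1) hrmeas.aestronglyMeasurable (1 + k)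
      (Filter.Eventually.of_forall fun ω => ?_)).integrable le_rfl
    have h1 : (Y ω) ^ z' ≤ (Y ω) ^ (1:ℝ) :=
      Real.rpow_le_rpow_of_exponent_le (hY1 ω) (le_of_lt hz1)
    rw [Real.norm_eq_abs, abs_of_nonneg (Real.rpow_nonneg (by linarith [hY1 ω]) _)]
    rw [Real.rpow_one] at h1
    linarith [hYk ω]
  have hfinal : c ^ z' * (μ {ω | c ≤ Y ω}).toReal ≤ ∫ ω, (Y ω) ^ z' ∂μ := by
    have hmono := integral_mono ((integrable_const (c ^ z')).indicator hA) hrint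
      (fun ω => ?_)
    · rw [integral_indicator_const _ hA] at hmono
      simpa [mul_comm, Measure.real] using hmono
    · by_cases h : c ≤ Y ω
      · rw [Set.indicator_of_mem (show ω ∈ {ω | c ≤ Y ω} from h)]
        exact Real.rpow_le_rpow hc0.le h hz0.le
      · rw [Set.indicator_of_notMem (show ω ∉ {ω | c ≤ Y ω} from h)]
        exact Real.rpow_nonneg (by linarith [hY1 ω]) _
  calc (1 / (β ^ 2 + 1)) * (1 - 1/β) ^ z' * m ^ z'
      = (m * (1 - 1/β)) ^ z' * (1 / (β ^ 2 + 1)) := by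
        rw [Real.mul_rpow hm0.le h1β.le]; ring
    _ ≤ c ^ z' * (μ {ω | c ≤ Y ω}).toReal := by
        rw [← hc]
        exact mul_le_mul_of_nonneg_left hPA (Real.rpow_nonneg hc0.le _)
    _ ≤ _ := hfinal
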